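/- In an iterated (nᵢ, tᵢ+1)-threshold secret sharing scheme, if a secret is shared through i iterations (each i-share being itself shared into (i+1)-shares), an adversary that knows at most tⱼ of the j-shares of each (j-1)-share for every level j ≤ i learns no information about the secret: every possible secret value is consistent with the adversary's view. -/
import Mathlib

section Aux

variable {M : Type*} (i : ℕ) (ns ts : ℕ → ℕ)
    (Valid : (j : ℕ) → M → (Fin (ns j) → M) → Prop)
    (hperfect : ∀ j, ∀ A : Finset (Fin (ns j)), A.card ≤ ts j →
      ∀ v v' : M, ∀ g : Fin (ns j) → M, Valid j v g →
        ∃ g', Valid j v' g' ∧ ∀ a ∈ A, g' a = g a)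
    (K : (p : List ℕ) → Finset (Fin (ns p.length)))
    (hK : ∀ p, (K p).card ≤ ts p.length)
    (val : List ℕ → M)
    (hval : ∀ p : List ℕ, p.length < i →
      Valid p.length (val p) (fun k => val (p ++ [(k : ℕ)])))

noncomputable def shareG (base : List ℕ) (cur : M) : Fin (ns base.length) → M :=
  if h : base.length < i then
    Classical.choose
      (hperfect base.length (K base) (hK base) (val base) cur _ (hval base h))
  else fun m => val (base ++ [(m : ℕ)])

lemma shareG_spec (base : List ℕ) (cur : M) (h : base.length < i) :
    Valid base.length cur (shareG i ns ts Valid hperfect K hK val hval base cur) ∧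
    ∀ a ∈ K base,
      shareG i ns ts Valid hperfect K hK val hval base cur a = val (base ++ [(a : ℕ)]) := by
  unfold shareG
  rw [dif_pos h]
  exact Classical.choose_spec
    (hperfect base.length (K base) (hK base) (val base) cur _ (hval base h))

noncomputable def shareWalk : List ℕ → List ℕ → M → M
  | [], _, cur => cur
  | k :: rest, base, cur =>
      shareWalk rest (base ++ [k])
        (if hk : k < ns base.length
          then shareG i ns ts Valid hperfect K hK val hval base cur ⟨k, hk⟩
          else cur)

lemma shareWalk_last : ∀ (p base : List ℕ) (cur : M) (k : ℕ)
    (hk : k < ns (base ++ p).length),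
    shareWalk i ns ts Valid hperfect K hK val hval (p ++ [k]) base cur =
      shareG i ns ts Valid hperfect K hK val hval (base ++ p)
        (shareWalk i ns ts Valid hperfect K hK val hval p base cur) ⟨k, hk⟩ := by
  intro p
  induction p with
  | nil =>
      intro base cur k hk
      revert hk
      rw [List.append_nil]
      intro hk
      show (if h : k < ns base.length
          then shareG i ns ts Valid hperfect K hK val hval base cur ⟨k, h⟩
          else cur) = _
      rw [dif_pos hk]
      rfl
  | cons a rest ih =>
      intro base cur k hk
      have e : base ++ a :: rest = (base ++ [a]) ++ rest := by simp
      revert hk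
      rw [e]
      intro hk
      exact ih (base ++ [a]) _ k hk

lemma shareWalk_valid (p base : List ℕ) (cur : M) (h : (base ++ p).length < i) :
    Valid (base ++ p).length
      (shareWalk i ns ts Valid hperfect K hK val hval p base cur)
      (fun k : Fin (ns (base ++ p).length) =>
        shareWalk i ns ts Valid hperfect K hK val hval (p ++ [(k : ℕ)]) base cur) := by
  have hfun : (fun k : Fin (ns (base ++ p).length) =>
      shareWalk i ns ts Valid hperfect K hK val hval (p ++ [(k : ℕ)]) base cur) =
      shareG i ns ts Valid hperfect K hK val hval (base ++ p)
        (shareWalk i ns ts Valid hperfect K hK val hval p base cur) := by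
    funext k
    rw [shareWalk_last i ns ts Valid hperfect K hK val hval p base cur k k.isLt]
  rw [hfun]
  exact (shareG_spec i ns ts Valid hperfect K hK val hval (base ++ p) _ h).1

end Aux

/-- Iterated threshold secret sharing hides the secret: shares are organized in a tree,
where the value at path `p` of length `j` is a `j`-share, split via a perfectly hiding
`(ns j, ts j + 1)`-threshold scheme into its children `p ++ [k]`.  If for every level
`j ≤ i` the adversary knows at most `ts j` of the `j`-shares of each `(j-1)`-share,
then every possible secret value `v` is consistent with the adversary's view: there is
a valid sharing tree of `v` agreeing with the actual tree on all known shares. -/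
theorem stmt6 {M : Type*} (i : ℕ) (ns ts : ℕ → ℕ)
    -- `Valid j v g` : `g` is a valid level-`j` sharing of value `v` into `ns j` shares
    (Valid : (j : ℕ) → M → (Fin (ns j) → M) → Prop)
    -- perfect hiding: any ≤ ts j shares are consistent with every value
    (hperfect : ∀ j, ∀ A : Finset (Fin (ns j)), A.card ≤ ts j →
      ∀ v v' : M, ∀ g : Fin (ns j) → M, Valid j v g →
        ∃ g', Valid j v' g' ∧ ∀ a ∈ A, g' a = g a)
    -- the shares known to the adversary: at most `ts` shares of each share
    (K : (p : List ℕ) → Finset (Fin (ns p.length)))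
    (hK : ∀ p, (K p).card ≤ ts p.length)
    -- the actual sharing tree of some secret `val []`
    (val : List ℕ → M)
    (hval : ∀ p : List ℕ, p.length < i →
      Valid p.length (val p) (fun k => val (p ++ [(k : ℕ)])))
    (v : M) :
    ∃ val' : List ℕ → M,
      val' [] = v ∧
      (∀ p : List ℕ, p.length < i →
        Valid p.length (val' p) (fun k => val' (p ++ [(k : ℕ)]))) ∧
      (∀ p : List ℕ, p.length < i → ∀ k ∈ K p,
        val' (p ++ [(k : ℕ)]) = val (p ++ [(k : ℕ)])) := by
  refine ⟨fun p => shareWalk i ns ts Valid hperfect K hK val hval p [] v, rfl, ?_, ?_⟩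
  · intro p hp
    have := shareWalk_valid i ns ts Valid hperfect K hK val hval p [] v (by simpa using hp)
    simpa using this
  · intro p hp k hk
    have h1 := shareWalk_last i ns ts Valid hperfect K hK val hval p [] v (k : ℕ)
      (by simpa using k.isLt)
    have h2 := (shareG_spec i ns ts Valid hperfect K hK val hval p
      (shareWalk i ns ts Valid hperfect K hK val hval p [] v) hp).2 k hk
    simpa [h2] using h1.trans (by simp [Fin.eta]; congr <;> simp)
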